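/- Let d ≥ 1 and let H = (V, E) be a d-uniform hypergraph on n vertices that is not properly 2-colorable, but such that for every hyperedge e ∈ E the hypergraph (V, E ∖ {e}) is properly 2-colorable. Then the number of hyperedges satisfies |E| ≤ C(n, d−1) (the binomial coefficient n choose d−1). -/

import Mathlib

open Finset Module Submodule

/-- The coefficients used in the spanning argument. -/
noncomputable def lovaszCoeff (d : ℕ) (y : ℕ) : ℝ :=
  (-1 : ℝ) ^ (d - 1 - y) * ((y.factorial * (d - 1 - y).factorial : ℕ) : ℝ) / (d.factorial : ℕ)

lemma lovaszCoeff_rec_zero (d y : ℕ) (h1 : 1 ≤ y) (h2 : y ≤ d - 1) :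
    (y : ℝ) * lovaszCoeff d (y - 1) + ((d - y : ℕ) : ℝ) * lovaszCoeff d y = 0 := by
  obtain ⟨z, rfl⟩ : ∃ z, y = z + 1 := ⟨y - 1, by omega⟩
  obtain ⟨k, hk⟩ : ∃ k, d = z + k + 2 := ⟨d - z - 2, by omega⟩
  subst hk
  have e1 : z + k + 2 - 1 - (z + 1 - 1) = k + 1 := by omega
  have e2 : z + k + 2 - 1 - (z + 1) = k := by omega
  have e3 : z + k + 2 - (z + 1) = k + 1 := by omega
  have e4 : z + 1 - 1 = z := by omega
  have e5 : z + k + 1 - z = k + 1 := by omega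
  simp only [lovaszCoeff, e1, e2, e3, e4, e5]
  have hfac : ((z + k + 2).factorial : ℝ) ≠ 0 := by
    exact_mod_cast (Nat.factorial_pos (z + k + 2)).ne'
  field_simp
  simp only [show z + k + 2 - 1 - z = k + 1 by omega]
  rw [Nat.factorial_succ (k), Nat.factorial_succ (z)]
  push_cast
  ring

lemma lovaszCoeff_rec_one (d : ℕ) (hd : 1 ≤ d) :
    (d : ℝ) * lovaszCoeff d (d - 1) + ((d - d : ℕ) : ℝ) * lovaszCoeff d d = 1 := by
  obtain ⟨m, rfl⟩ : ∃ m, d = m + 1 := ⟨d - 1, by omega⟩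
  have e1 : m + 1 - 1 = m := rfl
  have e2 : m - m = 0 := by omega
  have e3 : m + 1 - (m + 1) = 0 := by omega
  simp only [lovaszCoeff, e1, e2, e3]
  have hfac : ((m + 1).factorial : ℝ) ≠ 0 := by
    exact_mod_cast (Nat.factorial_pos (m + 1)).ne'
  rw [Nat.factorial_succ m]
  push_cast
  field_simp
  simp

theorem critically_non_two_colorable_hypergraph_edge_bound {V : Type}
    [Fintype V] [DecidableEq V] (d n : ℕ) (hd : 1 ≤ d)
    (hn : Fintype.card V = n)
    (E : Finset (Finset V)) (hE : ∀ e ∈ E, e.card = d)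
    (hnc : ¬ ∃ c : V → Fin 2, ∀ e ∈ E, ¬ ∃ k, ∀ v ∈ e, c v = k)
    (hcrit : ∀ e ∈ E, ∃ c : V → Fin 2, ∀ e' ∈ E.erase e, ¬ ∃ k, ∀ v ∈ e', c v = k) :
    E.card ≤ n.choose (d - 1) := by
  classical
  push_neg at hnc
  -- Step 1: for each edge e, a color class S containing e such that every other
  -- edge meets both S and its complement.
  have hS : ∀ e ∈ E, ∃ S : Finset V, e ⊆ S ∧
      ∀ e' ∈ E, e' ≠ e → 1 ≤ (e' ∩ S).card ∧ (e' ∩ S).card ≤ d - 1 := by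
    intro e he
    obtain ⟨c, hc⟩ := hcrit e he
    obtain ⟨e₀, he₀E, k, hk⟩ := hnc c
    have he₀ : e₀ = e := by
      by_contra h
      exact hc e₀ (mem_erase.2 ⟨h, he₀E⟩) ⟨k, hk⟩
    subst he₀
    refine ⟨univ.filter (fun v => c v = k), fun v hv => by simp [hk v hv], ?_⟩
    intro e' he' hne
    have hmono := hc e' (mem_erase.2 ⟨hne, he'⟩)
    push_neg at hmono
    have hfin2 : ∀ a b : Fin 2, a ≠ b + 1 → a = b := by decide
    constructor
    · obtain ⟨v, hv, hvk⟩ := hmono (k + 1)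
      have hcv : c v = k := hfin2 _ _ hvk
      have : v ∈ e' ∩ univ.filter (fun v => c v = k) := by
        simp [mem_inter, hv, hcv]
      exact card_pos.2 ⟨v, this⟩
    · obtain ⟨v, hv, hvk⟩ := hmono k
      have hlt : (e' ∩ univ.filter (fun v => c v = k)).card < e'.card := by
        apply card_lt_card
        constructor
        · exact inter_subset_left
        · intro hsub
          have := hsub hv
          simp only [mem_inter, mem_filter, mem_univ, true_and] at this
          exact hvk this.2
      have := hE e' he'
      omega
  choose! S hSsub hScard using hS
  -- The ambient space: functions on E.
  set T := {x : Finset V // x ∈ E} with hT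
  -- Indicator vectors of (d-1)-sets.
  set ψ : Finset V → (T → ℝ) := fun f e => if f ⊆ e.1 then 1 else 0 with hψ
  set t : Finset (T → ℝ) := (univ.powersetCard (d - 1)).image ψ with ht
  -- Key computation: the weighted sum of indicators evaluated at a d-set x.
  have key : ∀ (x A : Finset V), x.card = d →
      ∑ f ∈ univ.powersetCard (d - 1),
        lovaszCoeff d ((f ∩ A).card) * (if f ⊆ x then (1 : ℝ) else 0)
      = ((x ∩ A).card : ℝ) * lovaszCoeff d ((x ∩ A).card - 1)
        + ((d - (x ∩ A).card : ℕ) : ℝ) * lovaszCoeff d ((x ∩ A).card) := by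
    intro x A hx
    have L1 : ∑ f ∈ univ.powersetCard (d - 1),
        lovaszCoeff d ((f ∩ A).card) * (if f ⊆ x then (1 : ℝ) else 0)
        = ∑ f ∈ x.powersetCard (d - 1), lovaszCoeff d ((f ∩ A).card) := by
      simp only [mul_ite, mul_one, mul_zero]
      rw [← Finset.sum_filter]
      congr 1
      ext f
      simp [Finset.mem_powersetCard, Finset.mem_filter, and_comm]
    have L2 : ∑ f ∈ x.powersetCard (d - 1), lovaszCoeff d ((f ∩ A).card)
        = ∑ v ∈ x, lovaszCoeff d (((x.erase v) ∩ A).card) := by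
      refine (Finset.sum_bij (fun v _ => x.erase v) ?_ ?_ ?_ ?_).symm
      · intro v hv
        rw [Finset.mem_powersetCard]
        exact ⟨erase_subset _ _, by rw [card_erase_of_mem hv, hx]⟩
      · intro v hv w hw hvw
        by_contra hne
        have hvw' : x.erase v = x.erase w := hvw
        have : v ∈ x.erase v := by rw [hvw']; exact mem_erase.2 ⟨hne, hv⟩
        exact (mem_erase.1 this).1 rfl
      · intro f hf
        rw [Finset.mem_powersetCard] at hf
        obtain ⟨hfx, hfc⟩ := hf
        have hlt : f.card < x.card := by omega
        obtain ⟨v, hvx, hvf⟩ : ∃ v ∈ x, v ∉ f := by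
          by_contra h
          push_neg at h
          exact absurd (card_le_card h) (by omega)
        refine ⟨v, hvx, ?_⟩
        show x.erase v = f
        symm
        apply Finset.eq_of_subset_of_card_le
        · intro u hu
          exact mem_erase.2 ⟨fun h => hvf (h ▸ hu), hfx hu⟩
        · simp [card_erase_of_mem hvx, hx, hfc]
      · intro v _; rfl
    have L3 : ∑ v ∈ x, lovaszCoeff d (((x.erase v) ∩ A).card)
        = ((x ∩ A).card : ℝ) * lovaszCoeff d ((x ∩ A).card - 1)
          + ((d - (x ∩ A).card : ℕ) : ℝ) * lovaszCoeff d ((x ∩ A).card) := by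
      rw [← Finset.sum_inter_add_sum_sdiff x A]
      have h1 : ∀ v ∈ x ∩ A, lovaszCoeff d (((x.erase v) ∩ A).card)
          = lovaszCoeff d ((x ∩ A).card - 1) := by
        intro v hv
        congr 1
        rw [erase_inter, card_erase_of_mem hv]
      have h2 : ∀ v ∈ x \ A, lovaszCoeff d (((x.erase v) ∩ A).card)
          = lovaszCoeff d ((x ∩ A).card) := by
        intro v hv
        rw [mem_sdiff] at hv
        congr 2
        rw [erase_inter, erase_eq_of_notMem]
        simp [hv.2]
      rw [Finset.sum_congr rfl h1, Finset.sum_congr rfl h2,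
        Finset.sum_const, Finset.sum_const]
      have hc : (x \ A).card = d - (x ∩ A).card := by
        have := card_inter_add_card_sdiff x A
        omega
      rw [hc]
      simp [nsmul_eq_mul]
    rw [L1, L2, L3]
  -- The standard basis vectors of T → ℝ lie in the span of t.
  have hsingle : ∀ e : T,
      (fun e' : T => if e' = e then (1 : ℝ) else 0) ∈ Submodule.span ℝ (t : Set (T → ℝ)) := by
    intro e
    have heq : (fun e' : T => if e' = e then (1 : ℝ) else 0)
        = ∑ f ∈ univ.powersetCard (d - 1), lovaszCoeff d ((f ∩ S e.1).card) • ψ f := by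
      funext e'
      rw [Finset.sum_apply]
      have : ∀ f, (lovaszCoeff d ((f ∩ S e.1).card) • ψ f) e'
          = lovaszCoeff d ((f ∩ S e.1).card) * (if f ⊆ e'.1 then (1 : ℝ) else 0) := by
        intro f; simp [hψ]
      rw [Finset.sum_congr rfl fun f _ => this f]
      rw [key e'.1 (S e.1) (hE e'.1 e'.2)]
      by_cases hee : e' = e
      · subst hee
        have hsub : e'.1 ∩ S e'.1 = e'.1 := by
          apply Finset.inter_eq_left.2
          exact hSsub e'.1 e'.2
        rw [hsub, hE e'.1 e'.2, if_pos rfl]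
        exact (lovaszCoeff_rec_one d hd).symm
      · have hne : e'.1 ≠ e.1 := fun h => hee (Subtype.ext h)
        obtain ⟨hl, hu⟩ := hScard e.1 e.2 e'.1 e'.2 hne
        rw [if_neg hee]
        exact (lovaszCoeff_rec_zero d _ hl hu).symm
    rw [heq]
    apply Submodule.sum_smul_mem
    intro f hf
    apply Submodule.subset_span
    exact Finset.mem_coe.2 (Finset.mem_image_of_mem ψ hf)
  have hspan : Submodule.span ℝ (t : Set (T → ℝ)) = ⊤ := by
    rw [eq_top_iff]
    intro x _
    have hx : x = ∑ e : T, x e • (fun e' : T => if e' = e then (1 : ℝ) else 0) := by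
      funext j
      rw [Finset.sum_apply]
      simp only [Pi.smul_apply, smul_eq_mul, mul_ite, mul_one, mul_zero]
      rw [Finset.sum_ite_eq univ j x]
      simp
    rw [hx]
    exact Submodule.sum_smul_mem _ _ (fun e _ => hsingle e)
  have hrank : E.card = finrank ℝ (Submodule.span ℝ (t : Set (T → ℝ))) := by
    rw [hspan, finrank_top, Module.finrank_pi, Fintype.card_coe]
  rw [hrank]
  calc finrank ℝ (Submodule.span ℝ (t : Set (T → ℝ))) ≤ t.card :=
        finrank_span_finset_le_card t
    _ ≤ (univ.powersetCard (d - 1)).card := Finset.card_image_le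
    _ = n.choose (d - 1) := by
        rw [Finset.card_powersetCard, Finset.card_univ, hn]
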